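/- Fenchel duality for entropy projection on a finite set: for convex lower-semicontinuous g: ℝ^d → (−∞, +∞], min over probability mass functions q of KL(q‖p) + g(E_q[γ(z)]) equals max over κ ∈ ℝ^d of −log Σ_z p(z) exp(⟨κ, γ(z)⟩) − g*(−κ), where g* is the Legendre–Fenchel conjugate, provided standard constraint qualification holds (e.g., g is finite and continuous at some point of the convex hull of γ(Z)). -/

import Mathlib

open Matrix
set_option maxHeartbeats 1000000

lemma real_le_of_forall_pos_le_add {a b : ℝ} (h : ∀ ε : ℝ, 0 < ε → a ≤ b + ε) : a ≤ b := by
  by_contra hc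
  push_neg at hc
  have := h ((a - b)/2) (by linarith)
  linarith


lemma exists_affine_minorant {d : ℕ} (g : (Fin d → ℝ) → ℝ)
    (hg : ConvexOn ℝ Set.univ g) (hgc : Continuous g) (x0 : Fin d → ℝ) {ε : ℝ} (hε : 0 < ε) :
    ∃ (u : Fin d → ℝ) (c : ℝ), (∀ x, u ⬝ᵥ x + c ≤ g x) ∧ g x0 - ε ≤ u ⬝ᵥ x0 + c := by
  set epi : Set ((Fin d → ℝ) × ℝ) := {q | g q.1 ≤ q.2} with hepi
  have hconv : Convex ℝ epi := by
    have := hg.convex_epigraph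
    simpa [epi, Set.mem_univ] using this
  have hclosed : IsClosed epi := isClosed_le (hgc.comp continuous_fst) continuous_snd
  have hnot : (x0, g x0 - ε) ∉ epi := by
    simp only [epi, Set.mem_setOf_eq]
    push_neg
    linarith
  obtain ⟨f, u, hfu, hfb⟩ := geometric_hahn_banach_point_closed hconv hclosed hnot
  have hmem : ∀ x : Fin d → ℝ, (x, g x) ∈ epi := fun x => le_refl (g x)
  set L : (Fin d → ℝ) →ₗ[ℝ] ℝ := f.toLinearMap.comp (LinearMap.inl ℝ (Fin d → ℝ) ℝ) with hL
  have hLf : ∀ x : Fin d → ℝ, f (x, 0) = L x := fun x => rfl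
  set b : ℝ := f (0, 1) with hb
  have hrep : ∀ (x : Fin d → ℝ) (t : ℝ), f (x, t) = L x + t * b := by
    intro x t
    have h1 : (x, t) = (x, (0:ℝ)) + t • ((0 : Fin d → ℝ), (1:ℝ)) := by
      simp [Prod.ext_iff]
    rw [h1, map_add, ContinuousLinearMap.map_smul, hLf, hb, smul_eq_mul]
  have hbpos : 0 < b := by
    rcases lt_trichotomy b 0 with h | h | h
    · exfalso
      have h1 : ∀ t : ℝ, g x0 ≤ t → u < L x0 + t * b := by
        intro t ht
        have := hfb (x0, t) ht
        rwa [hrep] at this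
      set t := max (g x0) ((u - L x0) / b + 1) with htd
      have h2 := h1 t (le_max_left _ _)
      have h3 : (u - L x0) / b + 1 ≤ t := le_max_right _ _
      have h4 : t * b ≤ ((u - L x0) / b + 1) * b := (mul_le_mul_right_of_neg h).mpr h3
      rw [add_mul, div_mul_cancel₀ _ (ne_of_lt h)] at h4
      linarith
    · exfalso
      have h1 := hfb (x0, g x0) (hmem x0)
      rw [hrep] at h1
      have h2 : f (x0, g x0 - ε) < u := hfu
      rw [hrep] at h2
      rw [h] at h1 h2
      linarith
    · exact h
  set w : Fin d → ℝ := fun i => -(L (fun j => if i = j then 1 else 0)) / b with hw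
  have hdot : ∀ x : Fin d → ℝ, w ⬝ᵥ x = -(L x) / b := by
    intro x
    have hx : L x = ∑ i, x i * L (fun j => if i = j then 1 else 0) := by
      conv_lhs => rw [pi_eq_sum_univ x, map_sum]
      exact Finset.sum_congr rfl (fun i _ => by rw [LinearMap.map_smul, smul_eq_mul])
    rw [dotProduct, hx]
    rw [← Finset.sum_neg_distrib, Finset.sum_div]
    exact Finset.sum_congr rfl (fun i _ => by rw [hw]; ring)
  refine ⟨w, u / b, ?_, ?_⟩
  · intro x
    have h1 := hfb (x, g x) (hmem x)
    rw [hrep] at h1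
    rw [hdot, ← add_div, div_le_iff₀ hbpos]
    linarith
  · have h2 : f (x0, g x0 - ε) < u := hfu
    rw [hrep] at h2
    rw [hdot, ← add_div, le_div_iff₀ hbpos]
    nlinarith


lemma phi_hasDerivAt {Z : Type*} [Fintype Z] [Nonempty Z] {d : ℕ}
    (p : Z → ℝ) (hp : ∀ z, 0 < p z) (γ : Z → Fin d → ℝ) (κ v : Fin d → ℝ) :
    HasDerivAt (fun t : ℝ => Real.log (∑ z, p z * Real.exp ((κ + t • v) ⬝ᵥ γ z)))
      ((∑ z, p z * Real.exp (κ ⬝ᵥ γ z) * (v ⬝ᵥ γ z)) / (∑ z, p z * Real.exp (κ ⬝ᵥ γ z))) 0 := by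
  have hfun : ∀ (t : ℝ) (z : Z), (κ + t • v) ⬝ᵥ γ z = κ ⬝ᵥ γ z + t * (v ⬝ᵥ γ z) := by
    intro t z
    rw [add_dotProduct, smul_dotProduct, smul_eq_mul]
  have hSpos : 0 < ∑ z, p z * Real.exp (κ ⬝ᵥ γ z) :=
    Finset.sum_pos (fun z _ => mul_pos (hp z) (Real.exp_pos _)) Finset.univ_nonempty
  have hS : HasDerivAt (fun t : ℝ => ∑ z, p z * Real.exp ((κ + t • v) ⬝ᵥ γ z))
      (∑ z, p z * Real.exp (κ ⬝ᵥ γ z) * (v ⬝ᵥ γ z)) 0 := by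
    simp only [hfun]
    have : ∀ z ∈ Finset.univ (α := Z), HasDerivAt
        (fun t : ℝ => p z * Real.exp (κ ⬝ᵥ γ z + t * (v ⬝ᵥ γ z)))
        (p z * Real.exp (κ ⬝ᵥ γ z) * (v ⬝ᵥ γ z)) 0 := by
      intro z _
      have h1 : HasDerivAt (fun t : ℝ => κ ⬝ᵥ γ z + t * (v ⬝ᵥ γ z)) (v ⬝ᵥ γ z) 0 :=
        (hasDerivAt_mul_const (v ⬝ᵥ γ z)).const_add (κ ⬝ᵥ γ z)
      have h2 := (h1.exp).const_mul (p z)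
      simpa [mul_assoc] using h2
    exact HasDerivAt.fun_sum this
  have hne : (∑ z, p z * Real.exp ((κ + (0:ℝ) • v) ⬝ᵥ γ z)) ≠ 0 := by
    simp only [hfun]
    simp only [zero_mul, add_zero]
    exact ne_of_gt hSpos
  have := hS.log hne
  convert this using 2
  simp only [hfun, zero_mul, add_zero]

lemma gibbs_nonneg {Z : Type*} [Fintype Z] (q r : Z → ℝ) (hq : ∀ z, 0 ≤ q z)
    (hr : ∀ z, 0 < r z) (hq1 : ∑ z, q z = 1) (hr1 : ∑ z, r z = 1) :
    0 ≤ ∑ z, q z * Real.log (q z / r z) := by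
  have key : ∀ z, q z - r z ≤ q z * Real.log (q z / r z) := by
    intro z
    rcases eq_or_lt_of_le (hq z) with h | h
    · rw [← h]
      simp [(hr z).le]
    · have hlog : Real.log (r z / q z) ≤ r z / q z - 1 :=
        Real.log_le_sub_one_of_pos (div_pos (hr z) h)
      have : Real.log (q z / r z) = - Real.log (r z / q z) := by
        rw [← Real.log_inv, inv_div]
      rw [this]
      have h2 : q z * (-(Real.log (r z / q z))) ≥ q z * (1 - r z / q z) := by
        apply mul_le_mul_of_nonneg_left _ h.le
        linarith
      have h3 : q z * (1 - r z / q z) = q z - r z := by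
        field_simp
      linarith
  calc (0:ℝ) = ∑ z, (q z - r z) := by rw [Finset.sum_sub_distrib, hq1, hr1]; ring
  _ ≤ _ := Finset.sum_le_sum (fun z _ => key z)

lemma ereal_isup_coe {α : Type*} [Nonempty α] (f : α → ℝ) (h : BddAbove (Set.range f)) :
    (⨆ x, ((f x : ℝ) : EReal)) = ((sSup (Set.range f) : ℝ) : EReal) := by
  apply le_antisymm
  · exact iSup_le fun x => EReal.coe_le_coe_iff.mpr (le_csSup h (Set.mem_range_self x))
  · have hne : (Set.range f).Nonempty := Set.range_nonempty f
    obtain ⟨c, hc⟩ := hne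
    rw [show ((sSup (Set.range f) : ℝ) : EReal) = sSup ((fun r : ℝ => (r : EReal)) '' (Set.range f)) from
      (Monotone.map_csSup_of_continuousAt (continuous_coe_real_ereal.continuousAt)
        (fun _ _ hxy => EReal.coe_le_coe_iff.mpr hxy) ⟨c, hc⟩ h)]
    apply sSup_le
    rintro x ⟨r, ⟨a, ha⟩, rfl⟩
    exact le_trans (by rw [ha]) (le_iSup (fun x => ((f x : ℝ) : EReal)) a)

lemma ereal_isup_top {α : Type*} (f : α → ℝ) (h : ¬ BddAbove (Set.range f)) :
    (⨆ x, ((f x : ℝ) : EReal)) = ⊤ := by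
  rw [iSup_eq_top]
  intro b hb
  induction b with
  | bot =>
      obtain ⟨a⟩ : Nonempty α := by
        by_contra hne
        exact h ⟨0, by rintro x ⟨a, rfl⟩; exact absurd ⟨a⟩ hne⟩
      exact ⟨a, EReal.bot_lt_coe _⟩
  | coe b =>
      obtain ⟨x, hx⟩ := not_bddAbove_iff.mp h b
      obtain ⟨a, rfl⟩ := hx.1
      exact ⟨a, EReal.coe_lt_coe_iff.mpr hx.2⟩
  | top => exact absurd hb (lt_irrefl _)

/-- Fenchel duality for entropy projection on a finite set:
`min_q KL(q‖p) + g(E_q[γ]) = max_κ −log Σ_z p(z) exp⟨κ, γ(z)⟩ − g*(−κ)`,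
for `g` convex, finite and continuous; the dual maximum is attained. -/
theorem fenchel_duality_entropy_projection {Z : Type*} [Fintype Z] [Nonempty Z]
    {d : ℕ} (p : Z → ℝ) (hp : ∀ z, 0 < p z) (hp1 : ∑ z, p z = 1)
    (γ : Z → Fin d → ℝ) (g : (Fin d → ℝ) → ℝ)
    (hg : ConvexOn ℝ Set.univ g) (hgc : Continuous g) :
    ∃ κ : Fin d → ℝ,
      (⨅ q : {q : Z → ℝ // (∀ z, 0 ≤ q z) ∧ ∑ z, q z = 1},
          (((∑ z, q.1 z * Real.log (q.1 z / p z)) + g (∑ z, q.1 z • γ z) : ℝ) :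
            EReal)) =
        ((-Real.log (∑ z, p z * Real.exp (κ ⬝ᵥ γ z)) : ℝ) : EReal) -
          (⨆ x : Fin d → ℝ, ((x ⬝ᵥ (-κ) - g x : ℝ) : EReal)) ∧
      ∀ κ' : Fin d → ℝ,
        (((-Real.log (∑ z, p z * Real.exp (κ' ⬝ᵥ γ z)) : ℝ) : EReal) -
            ⨆ x : Fin d → ℝ, ((x ⬝ᵥ (-κ') - g x : ℝ) : EReal)) ≤
          ((-Real.log (∑ z, p z * Real.exp (κ ⬝ᵥ γ z)) : ℝ) : EReal) -
            ⨆ x : Fin d → ℝ, ((x ⬝ᵥ (-κ) - g x : ℝ) : EReal) := by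
  classical
  set S : (Fin d → ℝ) → ℝ := fun κ => ∑ z, p z * Real.exp (κ ⬝ᵥ γ z) with hSdef
  have hSpos : ∀ κ, 0 < S κ := fun κ =>
    Finset.sum_pos (fun z _ => mul_pos (hp z) (Real.exp_pos _)) Finset.univ_nonempty
  set φ : (Fin d → ℝ) → ℝ := fun κ => Real.log (S κ) with hφdef
  set gs : (Fin d → ℝ) → ℝ := fun y => sSup (Set.range fun x => x ⬝ᵥ y - g x) with hgsdef
  set Bdd : (Fin d → ℝ) → Prop := fun y => BddAbove (Set.range fun x => x ⬝ᵥ y - g x) with hBdef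
  have hgs_ub : ∀ y, Bdd y → ∀ x, x ⬝ᵥ y - g x ≤ gs y :=
    fun y hy x => le_csSup hy ⟨x, rfl⟩
  have hgs_lub : ∀ (y : Fin d → ℝ) (b : ℝ), (∀ x, x ⬝ᵥ y - g x ≤ b) → gs y ≤ b :=
    fun y b h => csSup_le (Set.range_nonempty _) (by rintro r ⟨x, rfl⟩; exact h x)
  have hBdd_of : ∀ (y : Fin d → ℝ) (b : ℝ), (∀ x, x ⬝ᵥ y - g x ≤ b) → Bdd y :=
    fun y b h => ⟨b, by rintro r ⟨x, rfl⟩; exact h x⟩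
  have hdotcont : ∀ x : Fin d → ℝ, Continuous (fun κ : Fin d → ℝ => x ⬝ᵥ κ) := by
    intro x
    exact continuous_finset_sum _ (fun i _ => continuous_const.mul (continuous_apply i))
  have hφcont : Continuous φ := by
    apply Continuous.log
    · exact continuous_finset_sum _ (fun z _ =>
        continuous_const.mul (Real.continuous_exp.comp (by
          simpa [dotProduct_comm] using (hdotcont (γ z)).comp continuous_id)))
    · exact fun κ => (hSpos κ).ne'
  -- lower bound for φ
  obtain ⟨z0⟩ : Nonempty Z := inferInstance
  set Cγ : ℝ := ∑ i, |γ z0 i| with hCγdef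
  have hCγ : 0 ≤ Cγ := Finset.sum_nonneg (fun i _ => abs_nonneg _)
  have hφlb : ∀ κ : Fin d → ℝ, Real.log (p z0) - ‖κ‖ * Cγ ≤ φ κ := by
    intro κ
    have h1 : p z0 * Real.exp (κ ⬝ᵥ γ z0) ≤ S κ :=
      Finset.single_le_sum (f := fun z => p z * Real.exp (κ ⬝ᵥ γ z))
        (fun z _ => (mul_pos (hp z) (Real.exp_pos _)).le) (Finset.mem_univ z0)
    have h2 : Real.log (p z0 * Real.exp (κ ⬝ᵥ γ z0)) ≤ φ κ :=
      Real.log_le_log (mul_pos (hp z0) (Real.exp_pos _)) h1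
    rw [Real.log_mul (hp z0).ne' (Real.exp_pos _).ne', Real.log_exp] at h2
    have h3 : -(‖κ‖ * Cγ) ≤ κ ⬝ᵥ γ z0 := by
      have h4 : |κ ⬝ᵥ γ z0| ≤ ‖κ‖ * Cγ := by
        rw [hCγdef, Finset.mul_sum]
        refine le_trans (Finset.abs_sum_le_sum_abs _ _) (Finset.sum_le_sum fun i _ => ?_)
        rw [abs_mul]
        exact mul_le_mul_of_nonneg_right
          (by simpa [Real.norm_eq_abs] using norm_le_pi_norm κ i) (abs_nonneg _)
      linarith [neg_abs_le (κ ⬝ᵥ γ z0)]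
    linarith
  -- norm squared vs dot product
  have hnormsq : ∀ κ : Fin d → ℝ, ‖κ‖ ^ 2 ≤ κ ⬝ᵥ κ := by
    intro κ
    have hnn : 0 ≤ κ ⬝ᵥ κ := Finset.sum_nonneg fun i _ => mul_self_nonneg _
    have h1 : ∀ i, ‖κ i‖ ≤ Real.sqrt (κ ⬝ᵥ κ) := by
      intro i
      have h2 : κ i * κ i ≤ κ ⬝ᵥ κ :=
        Finset.single_le_sum (fun j _ => mul_self_nonneg (κ j)) (Finset.mem_univ i)
      have h3 : Real.sqrt (κ i * κ i) ≤ Real.sqrt (κ ⬝ᵥ κ) := Real.sqrt_le_sqrt h2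
      rwa [Real.norm_eq_abs, ← Real.sqrt_mul_self_eq_abs]
    have h4 : ‖κ‖ ≤ Real.sqrt (κ ⬝ᵥ κ) :=
      (pi_norm_le_iff_of_nonneg (Real.sqrt_nonneg _)).mpr h1
    calc ‖κ‖ ^ 2 ≤ Real.sqrt (κ ⬝ᵥ κ) ^ 2 := by
          exact pow_le_pow_left₀ (norm_nonneg κ) h4 2
    _ = κ ⬝ᵥ κ := Real.sq_sqrt hnn
  -- bound for g on ball
  set R : ℝ := Cγ + 1 with hRdef
  have hRpos : 0 < R := by positivity
  obtain ⟨xm, _, hxm⟩ := (isCompact_closedBall (0 : Fin d → ℝ) R).exists_isMaxOn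
    ⟨0, Metric.mem_closedBall_self hRpos.le⟩ hgc.continuousOn
  set M : ℝ := g xm with hMdef
  have hM : ∀ x : Fin d → ℝ, ‖x‖ ≤ R → g x ≤ M := fun x hx =>
    hxm (by simpa [Metric.mem_closedBall, dist_zero_right] using hx)
  -- sublevel sets
  set Scl : ℝ → Set (Fin d → ℝ) := fun t => {κ | ∀ x, x ⬝ᵥ (-κ) - g x ≤ t - φ κ} with hScldef
  have hScl_mem : ∀ (t : ℝ) (κ : Fin d → ℝ), κ ∈ Scl t ↔ (Bdd (-κ) ∧ φ κ + gs (-κ) ≤ t) := by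
    intro t κ
    constructor
    · intro h
      have hB : Bdd (-κ) := hBdd_of _ _ h
      exact ⟨hB, by linarith [hgs_lub (-κ) (t - φ κ) h]⟩
    · rintro ⟨hB, h⟩ x
      linarith [hgs_ub (-κ) hB x]
  have hScl_closed : ∀ t, IsClosed (Scl t) := by
    intro t
    have : Scl t = ⋂ x : Fin d → ℝ, {κ | x ⬝ᵥ (-κ) - g x ≤ t - φ κ} := by
      ext κ
      simp [hScldef, Set.mem_iInter]
    rw [this]
    refine isClosed_iInter fun x => isClosed_le ?_ ?_
    · have : Continuous fun κ : Fin d → ℝ => x ⬝ᵥ (-κ) :=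
        ((hdotcont x).comp continuous_neg)
      exact this.sub continuous_const
    · exact continuous_const.sub hφcont
  have hScl_norm : ∀ (t : ℝ) (κ : Fin d → ℝ), κ ∈ Scl t →
      ‖κ‖ ≤ max 0 (t + M - Real.log (p z0)) := by
    intro t κ hκ
    rcases eq_or_ne κ 0 with rfl | hne
    · simp
    have hnpos : 0 < ‖κ‖ := norm_pos_iff.mpr hne
    set x : Fin d → ℝ := -((R / ‖κ‖) • κ) with hxdef
    have hxnorm : ‖x‖ = R := by
      rw [hxdef, norm_neg, norm_smul, Real.norm_eq_abs,
        abs_of_pos (div_pos hRpos hnpos), div_mul_cancel₀ _ hnpos.ne']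
    have hgx : g x ≤ M := hM x (le_of_eq hxnorm)
    have hdot : x ⬝ᵥ (-κ) = (R / ‖κ‖) * (κ ⬝ᵥ κ) := by
      rw [hxdef, neg_dotProduct, dotProduct_neg, neg_neg, smul_dotProduct, smul_eq_mul]
    have hdotge : R * ‖κ‖ ≤ x ⬝ᵥ (-κ) := by
      rw [hdot]
      have := mul_le_mul_of_nonneg_left (hnormsq κ) (div_pos hRpos hnpos).le
      calc R * ‖κ‖ = (R / ‖κ‖) * ‖κ‖ ^ 2 := by field_simp
      _ ≤ (R / ‖κ‖) * (κ ⬝ᵥ κ) := this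
    have hmem := hκ x
    have hφb := hφlb κ
    have hfinal : ‖κ‖ ≤ t + M - Real.log (p z0) := by
      have hRC : R = Cγ + 1 := hRdef
      nlinarith [hnpos]
    exact le_trans hfinal (le_max_right _ _)
  have hScl_cpt : ∀ t, IsCompact (Scl t) := fun t =>
    (isCompact_closedBall (0 : Fin d → ℝ) _).of_isClosed_subset (hScl_closed t)
      (fun κ hκ => by
        rw [Metric.mem_closedBall, dist_zero_right]
        exact hScl_norm t κ hκ)
  have hScl_mono : ∀ {t1 t2 : ℝ}, t1 ≤ t2 → Scl t1 ⊆ Scl t2 := by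
    intro t1 t2 h κ hκ x
    linarith [hκ x]
  -- affine minorants
  have haff : ∀ (x0 : Fin d → ℝ) (ε : ℝ), 0 < ε →
      ∃ u : Fin d → ℝ, Bdd u ∧ g x0 - ε + gs u ≤ x0 ⬝ᵥ u := by
    intro x0 ε hε
    obtain ⟨u, c, h1, h2⟩ := exists_affine_minorant g hg hgc x0 hε
    have hub : ∀ x, x ⬝ᵥ u - g x ≤ -c := by
      intro x
      have := h1 x
      rw [dotProduct_comm] at this
      linarith
    refine ⟨u, hBdd_of _ _ hub, ?_⟩
    have := hgs_lub u (-c) hub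
    rw [dotProduct_comm x0 u]
    linarith
  obtain ⟨u0, hu0B, _⟩ := haff 0 1 one_pos
  set κ0 : Fin d → ℝ := -u0 with hκ0def
  have hκ0B : Bdd (-κ0) := by rwa [hκ0def, neg_neg]
  set c : ℝ := φ κ0 + gs (-κ0) with hcdef
  have hκ0mem : κ0 ∈ Scl c := (hScl_mem c κ0).mpr ⟨hκ0B, le_refl _⟩
  set Ψ : (Fin d → ℝ) → ℝ := fun κ => φ κ + gs (-κ) with hΨdef
  have hbddbelow : BddBelow (Ψ '' Scl c) := by
    refine ⟨Real.log (p z0) - max 0 (c + M - Real.log (p z0)) * Cγ - g 0, ?_⟩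
    rintro r ⟨κ, hκ, rfl⟩
    obtain ⟨hB, -⟩ := (hScl_mem c κ).mp hκ
    have h1 : -g 0 ≤ gs (-κ) := by
      have := hgs_ub (-κ) hB 0
      simpa using this
    have h2 : Real.log (p z0) - ‖κ‖ * Cγ ≤ φ κ := hφlb κ
    have h3 : ‖κ‖ ≤ max 0 (c + M - Real.log (p z0)) := hScl_norm c κ hκ
    have h4 : ‖κ‖ * Cγ ≤ max 0 (c + M - Real.log (p z0)) * Cγ :=
      mul_le_mul_of_nonneg_right h3 hCγ
    simp only [hΨdef]
    linarith
  set V : ℝ := sInf (Ψ '' Scl c) with hVdef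
  have himgne : (Ψ '' Scl c).Nonempty := ⟨Ψ κ0, κ0, hκ0mem, rfl⟩
  have hVle : ∀ κ ∈ Scl c, V ≤ Ψ κ := fun κ h => csInf_le hbddbelow ⟨κ, h, rfl⟩
  have hVmin : ∀ κ : Fin d → ℝ, Bdd (-κ) → V ≤ Ψ κ := by
    intro κ hB
    by_cases hmem : κ ∈ Scl c
    · exact hVle κ hmem
    · have h1 : ¬ (φ κ + gs (-κ) ≤ c) := fun h => hmem ((hScl_mem c κ).mpr ⟨hB, h⟩)
      push_neg at h1
      have h2 : V ≤ c := hVle κ0 hκ0mem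
      simp only [hΨdef]
      linarith
  -- existence of the minimizer via nested compact sets
  obtain ⟨κs, hκsmem, hκsB, hκsV⟩ :
      ∃ κs : Fin d → ℝ, κs ∈ Scl c ∧ Bdd (-κs) ∧ Ψ κs = V := by
    set K : ℕ → Set (Fin d → ℝ) := fun n => Scl c ∩ Scl (V + 1/((n:ℝ)+1)) with hKdef
    have hKne : ∀ n, (K n).Nonempty := by
      intro n
      have hpos : (0:ℝ) < 1/((n:ℝ)+1) := by positivity
      have hlt : V < V + 1/((n:ℝ)+1) := by linarith
      obtain ⟨r, ⟨κ, hκ, rfl⟩, hr⟩ := (csInf_lt_iff hbddbelow himgne).mp hlt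
      exact ⟨κ, hκ, (hScl_mem _ _).mpr ⟨((hScl_mem c κ).mp hκ).1, hr.le⟩⟩
    have hKanti : ∀ m n : ℕ, m ≤ n → K n ⊆ K m := by
      intro m n hmn
      apply Set.inter_subset_inter_right
      apply hScl_mono
      have h1 : (m:ℝ) + 1 ≤ (n:ℝ) + 1 := by
        have := (Nat.cast_le (α := ℝ)).mpr hmn
        linarith
      have h2 : (1:ℝ)/((n:ℝ)+1) ≤ 1/((m:ℝ)+1) :=
        one_div_le_one_div_of_le (by positivity) h1
      linarith
    have hdir : Directed (· ⊇ ·) K := fun m n =>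
      ⟨max m n, hKanti m _ (le_max_left _ _), hKanti n _ (le_max_right _ _)⟩
    have hKcl : ∀ n, IsClosed (K n) := fun n => (hScl_closed c).inter (hScl_closed _)
    have hKcpt : ∀ n, IsCompact (K n) := fun n => (hScl_cpt c).inter_right (hScl_closed _)
    obtain ⟨κs, hκs⟩ :=
      IsCompact.nonempty_iInter_of_directed_nonempty_isCompact_isClosed K hdir hKne hKcpt hKcl
    have hmem0 := Set.mem_iInter.mp hκs 0
    have hB := ((hScl_mem c κs).mp hmem0.1).1
    refine ⟨κs, hmem0.1, hB, le_antisymm ?_ (hVmin κs hB)⟩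
    apply real_le_of_forall_pos_le_add
    intro ε hε
    obtain ⟨n, hn⟩ := exists_nat_one_div_lt hε
    have hle := ((hScl_mem (V + 1/((n:ℝ)+1)) κs).mp (Set.mem_iInter.mp hκs n).2).2
    calc Ψ κs ≤ V + 1/((n:ℝ)+1) := hle
    _ ≤ V + ε := by linarith
  -- Gibbs distribution at κs
  set qs : Z → ℝ := fun z => p z * Real.exp (κs ⬝ᵥ γ z) / S κs with hqsdef
  have hqs_pos : ∀ z, 0 < qs z := fun z =>
    div_pos (mul_pos (hp z) (Real.exp_pos _)) (hSpos κs)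
  have hqs_sum : ∑ z, qs z = 1 := by
    rw [hqsdef, ← Finset.sum_div]
    exact div_self (hSpos κs).ne'
  set ms : Fin d → ℝ := ∑ z, qs z • γ z with hmsdef
  have hdotg : ∀ (q : Z → ℝ) (v : Fin d → ℝ), v ⬝ᵥ (∑ z, q z • γ z) = ∑ z, q z * (v ⬝ᵥ γ z) := by
    intro q v
    simp only [dotProduct, Finset.sum_apply, Pi.smul_apply, smul_eq_mul, Finset.mul_sum]
    rw [Finset.sum_comm]
    exact Finset.sum_congr rfl fun z _ => Finset.sum_congr rfl fun i _ => by ring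
  -- key subgradient inequality
  have hkey : ∀ y : Fin d → ℝ, Bdd y → gs (-κs) + ms ⬝ᵥ (y + κs) ≤ gs y := by
    intro y hy
    set v : Fin d → ℝ := -(y + κs) with hvdef
    have hDer := phi_hasDerivAt p hp γ κs v
    have hDval : (∑ z, p z * Real.exp (κs ⬝ᵥ γ z) * (v ⬝ᵥ γ z)) / S κs = v ⬝ᵥ ms := by
      rw [hmsdef, hdotg qs v, Finset.sum_div]
      refine Finset.sum_congr rfl fun z _ => ?_
      simp only [hqsdef]
      ring
    have hf0 : Real.log (∑ z, p z * Real.exp ((κs + (0:ℝ) • v) ⬝ᵥ γ z)) = φ κs := by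
      simp only [zero_smul, add_zero]; rfl
    have htends : Filter.Tendsto (fun t : ℝ => (φ κs - φ (κs + t • v)) / t)
        (nhdsWithin 0 (Set.Ioi 0)) (nhds (-(v ⬝ᵥ ms))) := by
      have h1 := hasDerivAt_iff_tendsto_slope.mp hDer
      have h2 : Set.Ioi (0:ℝ) ⊆ {(0:ℝ)}ᶜ := fun t ht => ne_of_gt ht
      have h3 := (h1.mono_left (nhdsWithin_mono _ h2)).neg
      rw [hDval] at h3
      refine h3.congr' ?_
      filter_upwards [self_mem_nhdsWithin] with t ht
      have hslope : slope (fun t : ℝ => Real.log (∑ z, p z * Real.exp ((κs + t • v) ⬝ᵥ γ z))) 0 t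
          = (φ (κs + t • v) - φ κs) / t := by
        rw [slope_def_field, hf0, sub_zero]
      rw [hslope]
      ring
    have hev : ∀ᶠ t in nhdsWithin 0 (Set.Ioi 0),
        (φ κs - φ (κs + t • v)) / t ≤ gs y - gs (-κs) := by
      filter_upwards [Ioc_mem_nhdsGT_of_mem (Set.mem_Ico.mpr ⟨le_refl (0:ℝ), zero_lt_one⟩)]
        with t ht
      obtain ⟨ht0, ht1⟩ := ht
      set yt : Fin d → ℝ := -κs + t • (y + κs) with hytdef
      have hcomb : ∀ x : Fin d → ℝ, x ⬝ᵥ yt - g x ≤ (1 - t) * gs (-κs) + t * gs y := by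
        intro x
        have e1 : x ⬝ᵥ yt = x ⬝ᵥ (-κs) + t * (x ⬝ᵥ (y + κs)) := by
          rw [hytdef, dotProduct_add, dotProduct_smul, smul_eq_mul]
        have e2 : x ⬝ᵥ (y + κs) = x ⬝ᵥ y + x ⬝ᵥ κs := dotProduct_add _ _ _
        have e3 : x ⬝ᵥ (-κs) = -(x ⬝ᵥ κs) := dotProduct_neg _ _
        have i1' : -(x ⬝ᵥ κs) - g x ≤ gs (-κs) := by
          rw [← e3]; exact hgs_ub (-κs) hκsB x
        have i2 := hgs_ub y hy x
        have j1 := mul_le_mul_of_nonneg_left i1' (by linarith : (0:ℝ) ≤ 1 - t)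
        have j2 := mul_le_mul_of_nonneg_left i2 ht0.le
        have hid : x ⬝ᵥ yt - g x
            = (1 - t) * (-(x ⬝ᵥ κs) - g x) + t * (x ⬝ᵥ y - g x) := by
          rw [e1, e2, e3]; ring
        rw [hid]
        exact add_le_add j1 j2
      have hBt : Bdd yt := hBdd_of _ _ hcomb
      have hgyt : gs yt ≤ (1 - t) * gs (-κs) + t * gs y := hgs_lub _ _ hcomb
      have hneg : -(κs + t • v) = yt := by
        rw [hvdef, hytdef]
        module
      have h4 : V ≤ φ (κs + t • v) + gs yt := by
        have hb : Bdd (-(κs + t • v)) := by rw [hneg]; exact hBt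
        have := hVmin (κs + t • v) hb
        rw [hΨdef] at this
        simp only at this
        rwa [hneg] at this
      have h5 : φ κs + gs (-κs) = V := hκsV
      rw [div_le_iff₀ ht0]
      nlinarith
    have hlim := le_of_tendsto htends hev
    have hvm : -(v ⬝ᵥ ms) = ms ⬝ᵥ (y + κs) := by
      rw [hvdef, neg_dotProduct, neg_neg, dotProduct_comm]
    linarith [hlim, hvm.symm.le, hvm.le]
  -- Fenchel equality at ms, -κs
  have hfen : g ms + gs (-κs) = ms ⬝ᵥ (-κs) := by
    refine le_antisymm (real_le_of_forall_pos_le_add fun ε hε => ?_) ?_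
    · obtain ⟨u, huB, hu⟩ := haff ms ε hε
      have h1 := hkey u huB
      have h2 : ms ⬝ᵥ (u + κs) = ms ⬝ᵥ u + ms ⬝ᵥ κs := dotProduct_add _ _ _
      have h3 : ms ⬝ᵥ (-κs) = -(ms ⬝ᵥ κs) := dotProduct_neg _ _
      rw [h3]
      linarith
    · have := hgs_ub (-κs) hκsB ms
      linarith
  -- KL at qs
  have hKL : ∑ z, qs z * Real.log (qs z / p z) = κs ⬝ᵥ ms - φ κs := by
    have hlog : ∀ z, Real.log (qs z / p z) = κs ⬝ᵥ γ z - φ κs := by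
      intro z
      have h1 : qs z / p z = Real.exp (κs ⬝ᵥ γ z) / S κs := by
        simp only [hqsdef]
        field_simp
        rw [div_mul_eq_div_div, div_self (hp z).ne']
      rw [h1, Real.log_div (Real.exp_pos _).ne' (hSpos κs).ne', Real.log_exp]
    have hstep : ∀ z, qs z * Real.log (qs z / p z)
        = qs z * (κs ⬝ᵥ γ z) - qs z * φ κs := by
      intro z; rw [hlog z]; ring
    rw [Finset.sum_congr rfl fun z _ => hstep z, Finset.sum_sub_distrib, ← Finset.sum_mul,
      hqs_sum, one_mul, hmsdef, hdotg qs κs]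
  -- weak duality
  have hweak : ∀ (q : Z → ℝ), (∀ z, 0 ≤ q z) → (∑ z, q z = 1) → ∀ κ : Fin d → ℝ, Bdd (-κ) →
      -φ κ - gs (-κ) ≤ (∑ z, q z * Real.log (q z / p z)) + g (∑ z, q z • γ z) := by
    intro q hq0 hq1 κ hκB
    set r : Z → ℝ := fun z => p z * Real.exp (κ ⬝ᵥ γ z) / S κ with hrdef
    have hr_pos : ∀ z, 0 < r z := fun z => div_pos (mul_pos (hp z) (Real.exp_pos _)) (hSpos κ)
    have hr_sum : ∑ z, r z = 1 := by
      rw [hrdef, ← Finset.sum_div]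
      exact div_self (hSpos κ).ne'
    have h0 := gibbs_nonneg q r hq0 hr_pos hq1 hr_sum
    have hsplit : ∀ z, q z * Real.log (q z / r z)
        = q z * Real.log (q z / p z) - q z * (κ ⬝ᵥ γ z) + q z * φ κ := by
      intro z
      rcases eq_or_lt_of_le (hq0 z) with h | h
      · rw [← h]; ring
      · have hlogr : Real.log (r z) = Real.log (p z) + (κ ⬝ᵥ γ z) - φ κ := by
          simp only [hrdef]
          rw [Real.log_div (mul_pos (hp z) (Real.exp_pos _)).ne' (hSpos κ).ne',
            Real.log_mul (hp z).ne' (Real.exp_pos _).ne', Real.log_exp]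
        rw [Real.log_div h.ne' (hr_pos z).ne', Real.log_div h.ne' (hp z).ne', hlogr]
        ring
    have hsum : ∑ z, q z * Real.log (q z / r z)
        = (∑ z, q z * Real.log (q z / p z)) - κ ⬝ᵥ (∑ z, q z • γ z) + φ κ := by
      rw [Finset.sum_congr rfl fun z _ => hsplit z, Finset.sum_add_distrib,
        Finset.sum_sub_distrib, ← Finset.sum_mul, hq1, one_mul, hdotg q κ]
    have hgm := hgs_ub (-κ) hκB (∑ z, q z • γ z)
    have hcomm : (∑ z, q z • γ z) ⬝ᵥ (-κ) = -(κ ⬝ᵥ (∑ z, q z • γ z)) := by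
      rw [dotProduct_neg, dotProduct_comm]
    rw [hcomm] at hgm
    linarith
  -- primal value of qs
  have hFs : (∑ z, qs z * Real.log (qs z / p z)) + g ms = -φ κs - gs (-κs) := by
    have h1 : ms ⬝ᵥ (-κs) = -(κs ⬝ᵥ ms) := by rw [dotProduct_neg, dotProduct_comm]
    have h2 := hfen
    rw [hKL]
    linarith
  -- conclusion
  refine ⟨κs, ?_, ?_⟩
  · have hsup : (⨆ x : Fin d → ℝ, ((x ⬝ᵥ (-κs) - g x : ℝ) : EReal))
        = ((gs (-κs) : ℝ) : EReal) := ereal_isup_coe _ hκsB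
    have hlog : Real.log (∑ z, p z * Real.exp (κs ⬝ᵥ γ z)) = φ κs := rfl
    rw [hsup, hlog, ← EReal.coe_sub]
    apply le_antisymm
    · have hq : (∀ z, 0 ≤ qs z) ∧ ∑ z, qs z = 1 := ⟨fun z => (hqs_pos z).le, hqs_sum⟩
      have hle := iInf_le (fun q : {q : Z → ℝ // (∀ z, 0 ≤ q z) ∧ ∑ z, q z = 1} =>
        (((∑ z, q.1 z * Real.log (q.1 z / p z)) + g (∑ z, q.1 z • γ z) : ℝ) : EReal))
        ⟨qs, hq⟩
      refine le_trans hle ?_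
      have heq : (∑ z, qs z * Real.log (qs z / p z)) + g (∑ z, qs z • γ z)
          = -φ κs - gs (-κs) := hFs
      rw [heq]
    · refine le_iInf fun q => ?_
      have hw := hweak q.1 q.2.1 q.2.2 κs hκsB
      exact EReal.coe_le_coe_iff.mpr hw
  · intro κ'
    by_cases hB' : BddAbove (Set.range fun x => x ⬝ᵥ (-κ') - g x)
    · have hsup' : (⨆ x : Fin d → ℝ, ((x ⬝ᵥ (-κ') - g x : ℝ) : EReal))
          = ((gs (-κ') : ℝ) : EReal) := ereal_isup_coe _ hB'
      have hsup : (⨆ x : Fin d → ℝ, ((x ⬝ᵥ (-κs) - g x : ℝ) : EReal))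
          = ((gs (-κs) : ℝ) : EReal) := ereal_isup_coe _ hκsB
      have hlog : Real.log (∑ z, p z * Real.exp (κs ⬝ᵥ γ z)) = φ κs := rfl
      have hlog' : Real.log (∑ z, p z * Real.exp (κ' ⬝ᵥ γ z)) = φ κ' := rfl
      rw [hsup', hsup, hlog, hlog', ← EReal.coe_sub, ← EReal.coe_sub]
      rw [EReal.coe_le_coe_iff]
      have h1 : V ≤ φ κ' + gs (-κ') := hVmin κ' hB'
      have h2 : φ κs + gs (-κs) = V := hκsV
      linarith
    · rw [ereal_isup_top _ hB', EReal.sub_top]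
      exact bot_le
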